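/- For every integer r ≥ 1, |Var(μ^(r+1)) − Var(μ^(r))| ≤ b. -/

import Mathlib

open Filter Topology MeasureTheory

noncomputable section

/-- Sum of the base-`b` digits of `n`. -/
def digitSum (b n : ℕ) : ℕ := (Nat.digits b n).sum

/-- `Δ^(r)(n) = s(n+r) - s(n)`, the variation of the base-`b` digit sum when adding `r`. -/
def delta (b r n : ℕ) : ℤ := (digitSum b (n + r) : ℤ) - (digitSum b n : ℤ)

lemma digitSum_base_mul_add (b : ℕ) (hb : 2 ≤ b) (m ε : ℕ) (hε : ε < b) :
    digitSum b (b * m + ε) = ε + digitSum b m := by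
  rcases Nat.eq_zero_or_pos (b * m + ε) with h | h
  · have hm : m = 0 := by
      rcases Nat.eq_zero_or_pos m with h' | h'
      · exact h'
      · exfalso; nlinarith
    have he : ε = 0 := by omega
    simp [hm, he, digitSum]
  · rw [digitSum, Nat.digits_def' (by omega : 1 < b) h]
    have h1 : (b * m + ε) % b = ε := by
      rw [Nat.mul_add_mod]; exact Nat.mod_eq_of_lt hε
    have h2 : (b * m + ε) / b = m := by
      rw [Nat.mul_add_div (by omega : 0 < b)]
      simp [Nat.div_eq_of_lt hε]
    rw [List.sum_cons, h1, h2]; rfl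

lemma delta_low (b q c m ε : ℕ) (hb : 2 ≤ b) (hε : ε < b) (hc : ε + c < b) :
    delta b (b*q+c) (b*m+ε) = delta b q m + c := by
  have h1 : b*m+ε + (b*q+c) = b*(m+q) + (ε+c) := by ring
  rw [delta, h1, digitSum_base_mul_add b hb _ _ hc,
    digitSum_base_mul_add b hb _ _ hε, delta]
  push_cast; ring

lemma delta_high (b q c m ε : ℕ) (hb : 2 ≤ b) (hε : ε < b) (hcb : c < b) (hc : b ≤ ε + c) :
    delta b (b*q+c) (b*m+ε) = delta b (q+1) m + (c : ℤ) - b := by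
  have e1 : b*(m+(q+1)) = b*m + b*q + b := by ring
  have h1 : b*m+ε + (b*q+c) = b*(m+(q+1)) + (ε+c-b) := by omega
  rw [delta, h1, digitSum_base_mul_add b hb _ _ (by omega),
    digitSum_base_mul_add b hb _ _ hε, delta]
  omega

lemma block_count (b q c : ℕ) (hb : 2 ≤ b) (hc : c < b) (d : ℤ) (m : ℕ) :
    ((Finset.range b).filter (fun ε => delta b (b*q+c) (b*m+ε) = d)).card
      = (if delta b q m = d - c then b - c else 0)
        + (if delta b (q+1) m = d - c + b then c else 0) := by
  rw [Finset.range_eq_Ico, ← Finset.Ico_union_Ico_eq_Ico (Nat.zero_le (b-c)) (by omega : b - c ≤ b),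
    Finset.filter_union, Finset.card_union_of_disjoint
      (Finset.disjoint_filter_filter (Finset.Ico_disjoint_Ico_consecutive 0 (b-c) b))]
  congr 1
  · have : ∀ ε ∈ Finset.Ico 0 (b-c), (delta b (b*q+c) (b*m+ε) = d) ↔ (delta b q m = d - c) := by
      intro ε hε
      simp only [Finset.mem_Ico] at hε
      rw [delta_low b q c m ε hb (by omega) (by omega)]
      constructor <;> intro h <;> omega
    rw [Finset.filter_congr this, Finset.filter_const]
    split <;> simp [Nat.card_Ico]
  · have : ∀ ε ∈ Finset.Ico (b-c) b, (delta b (b*q+c) (b*m+ε) = d) ↔ (delta b (q+1) m = d - c + b) := by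
      intro ε hε
      simp only [Finset.mem_Ico] at hε
      rw [delta_high b q c m ε hb (by omega) hc (by omega)]
      constructor <;> intro h <;> omega
    rw [Finset.filter_congr this, Finset.filter_const]
    split <;> simp [Nat.card_Ico] <;> omega

lemma sum_base_split (b M : ℕ) (hb : 0 < b) (f : ℕ → ℕ) :
    ∑ n ∈ Finset.range (b*M), f n = ∑ m ∈ Finset.range M, ∑ ε ∈ Finset.range b, f (b*m+ε) := by
  rw [← Finset.sum_product']
  apply Finset.sum_nbij' (fun n => (n / b, n % b)) (fun p => b * p.1 + p.2)
  · intro n hn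
    simp only [Finset.mem_range] at hn
    simp only [Finset.mem_product, Finset.mem_range]
    exact ⟨Nat.div_lt_of_lt_mul hn, Nat.mod_lt _ hb⟩
  · intro p hp
    simp only [Finset.mem_product, Finset.mem_range] at hp
    simp only [Finset.mem_range]
    calc b * p.1 + p.2 < b * p.1 + b := by omega
    _ = b * (p.1 + 1) := by ring
    _ ≤ b * M := Nat.mul_le_mul_left b hp.1
  · intro n _; exact Nat.div_add_mod n b
  · intro p hp
    simp only [Finset.mem_product, Finset.mem_range] at hp
    simp [Nat.mul_add_div hb, Nat.mul_add_mod, Nat.div_eq_of_lt hp.2, Nat.mod_eq_of_lt hp.2]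
  · intro n _; rw [Nat.div_add_mod]

lemma count_mul (b q c : ℕ) (hb : 2 ≤ b) (hc : c < b) (d : ℤ) (M : ℕ) :
    ((Finset.range (b*M)).filter (fun n => delta b (b*q+c) n = d)).card
      = (b - c) * ((Finset.range M).filter (fun m => delta b q m = d - c)).card
        + c * ((Finset.range M).filter (fun m => delta b (q+1) m = d - c + b)).card := by
  classical
  rw [Finset.card_filter, sum_base_split b M (by omega)]
  have : ∀ m, (∑ ε ∈ Finset.range b, if delta b (b*q+c) (b*m+ε) = d then 1 else 0)
      = (if delta b q m = d - c then b - c else 0)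
        + (if delta b (q+1) m = d - c + b then c else 0) := by
    intro m
    rw [← Finset.card_filter]
    exact block_count b q c hb hc d m
  rw [Finset.sum_congr rfl (fun m _ => this m), Finset.sum_add_distrib]
  congr 1
  · rw [Finset.card_filter, Finset.mul_sum]
    apply Finset.sum_congr rfl
    intro m _
    split <;> simp
  · rw [Finset.card_filter, Finset.mul_sum]
    apply Finset.sum_congr rfl
    intro m _
    split <;> simp

lemma mu_rec (b : ℕ) (hb : 2 ≤ b) (μ : ℕ → ℤ → ℝ)
    (hμ : ∀ (r : ℕ) (d : ℤ),
      Tendsto (fun N : ℕ =>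
        (((Finset.range N).filter fun n => delta b r n = d).card : ℝ) / N)
        atTop (𝓝 (μ r d)))
    (q c : ℕ) (hc : c < b) (d : ℤ) :
    μ (b*q+c) d = (((b:ℝ)-c)/b) * μ q (d - c) + ((c:ℝ)/b) * μ (q+1) (d - c + b) := by
  have hbM : Tendsto (fun M : ℕ => b * M) atTop atTop :=
    tendsto_atTop_mono (fun M => Nat.le_mul_of_pos_left M (by omega)) tendsto_id
  have h1 := (hμ (b*q+c) d).comp hbM
  have h2 : Tendsto (fun M : ℕ =>
      (((b:ℝ)-c)/b) * ((((Finset.range M).filter fun m => delta b q m = d - c).card : ℝ) / M)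
      + ((c:ℝ)/b) * ((((Finset.range M).filter fun m => delta b (q+1) m = d - c + b).card : ℝ) / M))
      atTop (𝓝 ((((b:ℝ)-c)/b) * μ q (d - c) + ((c:ℝ)/b) * μ (q+1) (d - c + b))) :=
    ((hμ q (d-c)).const_mul _).add ((hμ (q+1) (d-c+b)).const_mul _)
  refine tendsto_nhds_unique ?_ h2
  convert h1 using 2 with M
  rw [Function.comp_apply, count_mul b q c hb hc d M]
  push_cast [Nat.cast_sub (le_of_lt hc)]
  rw [div_mul_div_comm, div_mul_div_comm, ← add_div]

lemma shift_summable (g : ℤ → ℝ) (hg : Summable g) (a : ℤ) :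
    Summable (fun d : ℤ => g (d - a)) := by
  have := (Equiv.subRight a).summable_iff.mpr hg
  exact this

lemma shift_tsum (g : ℤ → ℝ) (a : ℤ) : ∑' d : ℤ, g (d - a) = ∑' d : ℤ, g d := by
  have := (Equiv.subRight a).tsum_eq g
  simpa [Function.comp] using this

lemma quad_shift (g : ℤ → ℝ) (hg0 : Summable g)
    (hg1 : Summable fun d : ℤ => (d:ℝ) * g d) (hg2 : Summable fun d : ℤ => (d:ℝ)^2 * g d) (a : ℤ) :
    Summable (fun d : ℤ => ((d:ℝ))^2 * g (d - a)) ∧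
    ∑' d : ℤ, ((d:ℝ))^2 * g (d - a)
      = (∑' d : ℤ, (d:ℝ)^2 * g d) + 2*(a:ℝ)*(∑' d : ℤ, (d:ℝ)*g d) + (a:ℝ)^2*(∑' d : ℤ, g d) := by
  set G : ℤ → ℝ := fun e => (e:ℝ)^2*g e + (2*(a:ℝ))*((e:ℝ)*g e) + (a:ℝ)^2*g e with hG
  have hGsum : Summable G := (hg2.add (hg1.mul_left _)).add (hg0.mul_left _)
  have hfun : ∀ d : ℤ, ((d:ℝ))^2 * g (d - a) = G (d - a) := by
    intro d; simp only [hG]; push_cast; ring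
  constructor
  · have := shift_summable G hGsum a
    exact this.congr (fun d => (hfun d).symm)
  · calc ∑' d : ℤ, ((d:ℝ))^2 * g (d - a) = ∑' d : ℤ, G (d - a) := tsum_congr hfun
      _ = ∑' e : ℤ, G e := shift_tsum G a
      _ = _ := by
        rw [hG]
        rw [Summable.tsum_add (hg2.add (hg1.mul_left _)) (hg0.mul_left _),
          Summable.tsum_add hg2 (hg1.mul_left _), tsum_mul_left, tsum_mul_left]

lemma lin_shift (g : ℤ → ℝ) (hg0 : Summable g)
    (hg1 : Summable fun d : ℤ => (d:ℝ) * g d) (a : ℤ) :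
    Summable (fun d : ℤ => ((d:ℝ)) * g (d - a)) ∧
    ∑' d : ℤ, ((d:ℝ)) * g (d - a)
      = (∑' d : ℤ, (d:ℝ)*g d) + (a:ℝ)*(∑' d : ℤ, g d) := by
  set G : ℤ → ℝ := fun e => (e:ℝ)*g e + (a:ℝ)*g e with hG
  have hGsum : Summable G := hg1.add (hg0.mul_left _)
  have hfun : ∀ d : ℤ, ((d:ℝ)) * g (d - a) = G (d - a) := by
    intro d; simp only [hG]; push_cast; ring
  constructor
  · exact (shift_summable G hGsum a).congr (fun d => (hfun d).symm)
  · calc ∑' d : ℤ, ((d:ℝ)) * g (d - a) = ∑' d : ℤ, G (d - a) := tsum_congr hfun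
      _ = ∑' e : ℤ, G e := shift_tsum G a
      _ = _ := by rw [hG, Summable.tsum_add hg1 (hg0.mul_left _), tsum_mul_left]
lemma mu_nonneg (b : ℕ) (μ : ℕ → ℤ → ℝ)
    (hμ : ∀ (r : ℕ) (d : ℤ),
      Tendsto (fun N : ℕ =>
        (((Finset.range N).filter fun n => delta b r n = d).card : ℝ) / N)
        atTop (𝓝 (μ r d))) (r : ℕ) (d : ℤ) : 0 ≤ μ r d :=
  ge_of_tendsto' (hμ r d) (fun N => by positivity)

lemma delta_zero (b n : ℕ) : delta b 0 n = 0 := by simp [delta]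

lemma mu_zero (b : ℕ) (μ : ℕ → ℤ → ℝ)
    (hμ : ∀ (r : ℕ) (d : ℤ),
      Tendsto (fun N : ℕ =>
        (((Finset.range N).filter fun n => delta b r n = d).card : ℝ) / N)
        atTop (𝓝 (μ r d))) (d : ℤ) : μ 0 d = if d = 0 then 1 else 0 := by
  by_cases hd : d = 0
  · subst hd
    simp only [if_pos rfl]
    refine tendsto_nhds_unique (hμ 0 0) ?_
    have hev : (fun N : ℕ =>
        (((Finset.range N).filter fun n => delta b 0 n = (0:ℤ)).card : ℝ) / N)
        =ᶠ[atTop] (fun _ => (1:ℝ)) := by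
      filter_upwards [eventually_ge_atTop 1] with N hN
      rw [Finset.filter_true_of_mem (fun n _ => delta_zero b n), Finset.card_range]
      exact div_self (Nat.cast_ne_zero.mpr (by omega))
    exact Tendsto.congr' hev.symm tendsto_const_nhds
  · simp only [if_neg hd]
    refine tendsto_nhds_unique (hμ 0 d) ?_
    have hev : ∀ N : ℕ,
        (((Finset.range N).filter fun n => delta b 0 n = d).card : ℝ) / N = 0 := by
      intro N
      rw [Finset.filter_false_of_mem (fun n _ => by rw [delta_zero]; exact fun h => hd h.symm)]
      simp
    simpa [hev] using tendsto_const_nhds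
lemma sum2 (μ : ℕ → ℤ → ℝ) (V : ℕ → ℝ)
    (hV : ∀ r : ℕ, HasSum (fun d : ℤ => (d : ℝ) ^ 2 * μ r d) (V r)) (r : ℕ) :
    Summable (fun d : ℤ => (d : ℝ) ^ 2 * μ r d) := (hV r).summable

lemma aux_summable_bound (μ : ℕ → ℤ → ℝ) (V : ℕ → ℝ)
    (hV : ∀ r : ℕ, HasSum (fun d : ℤ => (d : ℝ) ^ 2 * μ r d) (V r)) (r : ℕ) :
    Summable (fun d : ℤ => (d : ℝ) ^ 2 * μ r d + (if d = 0 then μ r 0 else 0)) := by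
  refine (sum2 μ V hV r).add ?_
  exact summable_of_ne_finset_zero (s := {(0:ℤ)}) (fun d hd => by
    simp only [Finset.mem_singleton] at hd; simp [hd])

lemma one_le_sq {d : ℤ} (hd : d ≠ 0) : (1:ℝ) ≤ (d:ℝ)^2 := by
  have h1 : (1:ℤ) ≤ |d| := Int.one_le_abs hd
  have h2 : (1:ℝ) ≤ |(d:ℝ)| := by
    rw [← Int.cast_abs]; exact_mod_cast h1
  nlinarith [abs_nonneg (d:ℝ), sq_abs (d:ℝ)]

lemma sum0 (b : ℕ) (μ : ℕ → ℤ → ℝ)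
    (hμ : ∀ (r : ℕ) (d : ℤ),
      Tendsto (fun N : ℕ =>
        (((Finset.range N).filter fun n => delta b r n = d).card : ℝ) / N)
        atTop (𝓝 (μ r d)))
    (V : ℕ → ℝ)
    (hV : ∀ r : ℕ, HasSum (fun d : ℤ => (d : ℝ) ^ 2 * μ r d) (V r)) (r : ℕ) :
    Summable (fun d : ℤ => μ r d) := by
  refine Summable.of_nonneg_of_le (fun d => mu_nonneg b μ hμ r d) (fun d => ?_)
    (aux_summable_bound μ V hV r)
  by_cases hd : d = 0
  · subst hd; simp
  · simp only [hd, if_false, add_zero]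
    nlinarith [mu_nonneg b μ hμ r d, one_le_sq hd]

lemma sum1 (b : ℕ) (μ : ℕ → ℤ → ℝ)
    (hμ : ∀ (r : ℕ) (d : ℤ),
      Tendsto (fun N : ℕ =>
        (((Finset.range N).filter fun n => delta b r n = d).card : ℝ) / N)
        atTop (𝓝 (μ r d)))
    (V : ℕ → ℝ)
    (hV : ∀ r : ℕ, HasSum (fun d : ℤ => (d : ℝ) ^ 2 * μ r d) (V r)) (r : ℕ) :
    Summable (fun d : ℤ => (d:ℝ) * μ r d) := by
  apply Summable.of_abs
  refine Summable.of_nonneg_of_le (fun d => abs_nonneg _) (fun d => ?_)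
    (aux_summable_bound μ V hV r)
  rw [abs_mul, abs_of_nonneg (mu_nonneg b μ hμ r d)]
  by_cases hd : d = 0
  · subst hd; simp [mu_nonneg b μ hμ r 0]
  · simp only [hd, if_false, add_zero]
    have h2 : |(d:ℝ)| ≤ (d:ℝ)^2 := by
      nlinarith [one_le_sq hd, abs_nonneg (d:ℝ), sq_abs (d:ℝ)]
    nlinarith [mu_nonneg b μ hμ r d, abs_nonneg (d:ℝ)]
section recs

variable (b : ℕ) (μ : ℕ → ℤ → ℝ) (V : ℕ → ℝ)

lemma mass_rec (hb : 2 ≤ b)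
    (hμ : ∀ (r : ℕ) (d : ℤ),
      Tendsto (fun N : ℕ =>
        (((Finset.range N).filter fun n => delta b r n = d).card : ℝ) / N)
        atTop (𝓝 (μ r d)))
    (hV : ∀ r : ℕ, HasSum (fun d : ℤ => (d : ℝ) ^ 2 * μ r d) (V r)) (q c : ℕ) (hc : c < b) :
    ∑' d : ℤ, μ (b*q+c) d
      = (((b:ℝ)-c)/b) * (∑' d : ℤ, μ q d) + ((c:ℝ)/b) * (∑' d : ℤ, μ (q+1) d) := by
  have hpt : ∀ d : ℤ, μ (b*q+c) d
      = (((b:ℝ)-c)/b) * μ q (d - (c:ℤ)) + ((c:ℝ)/b) * μ (q+1) (d - ((c:ℤ) - b)) := by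
    intro d
    rw [mu_rec b hb μ hμ q c hc d]
    congr 2
    ring
  rw [tsum_congr hpt,
    Summable.tsum_add ((shift_summable _ (sum0 b μ hμ V hV q) _).mul_left _)
      ((shift_summable _ (sum0 b μ hμ V hV (q+1)) _).mul_left _),
    tsum_mul_left, tsum_mul_left, shift_tsum, shift_tsum]

lemma E_rec (hb : 2 ≤ b)
    (hμ : ∀ (r : ℕ) (d : ℤ),
      Tendsto (fun N : ℕ =>
        (((Finset.range N).filter fun n => delta b r n = d).card : ℝ) / N)
        atTop (𝓝 (μ r d)))
    (hV : ∀ r : ℕ, HasSum (fun d : ℤ => (d : ℝ) ^ 2 * μ r d) (V r)) (q c : ℕ) (hc : c < b) :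
    ∑' d : ℤ, (d:ℝ) * μ (b*q+c) d
      = (((b:ℝ)-c)/b) * ((∑' d : ℤ, (d:ℝ) * μ q d) + (c:ℝ) * (∑' d : ℤ, μ q d))
        + ((c:ℝ)/b) * ((∑' d : ℤ, (d:ℝ) * μ (q+1) d)
            + ((c:ℝ) - b) * (∑' d : ℤ, μ (q+1) d)) := by
  obtain ⟨hs1, he1⟩ := lin_shift (μ q) (sum0 b μ hμ V hV q) (sum1 b μ hμ V hV q) (c:ℤ)
  obtain ⟨hs2, he2⟩ := lin_shift (μ (q+1)) (sum0 b μ hμ V hV (q+1))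
    (sum1 b μ hμ V hV (q+1)) ((c:ℤ) - b)
  have hpt : ∀ d : ℤ, (d:ℝ) * μ (b*q+c) d
      = (((b:ℝ)-c)/b) * ((d:ℝ) * μ q (d - (c:ℤ)))
        + ((c:ℝ)/b) * ((d:ℝ) * μ (q+1) (d - ((c:ℤ) - b))) := by
    intro d
    rw [mu_rec b hb μ hμ q c hc d]
    have h3 : d - (c:ℤ) + b = d - ((c:ℤ) - b) := by ring
    rw [← h3]
    ring
  rw [tsum_congr hpt, Summable.tsum_add (hs1.mul_left _) (hs2.mul_left _),
    tsum_mul_left, tsum_mul_left, he1, he2]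
  push_cast
  ring

lemma V_rec (hb : 2 ≤ b)
    (hμ : ∀ (r : ℕ) (d : ℤ),
      Tendsto (fun N : ℕ =>
        (((Finset.range N).filter fun n => delta b r n = d).card : ℝ) / N)
        atTop (𝓝 (μ r d)))
    (hV : ∀ r : ℕ, HasSum (fun d : ℤ => (d : ℝ) ^ 2 * μ r d) (V r)) (q c : ℕ) (hc : c < b) :
    V (b*q+c)
      = (((b:ℝ)-c)/b) * ((V q) + 2*(c:ℝ) * (∑' d : ℤ, (d:ℝ) * μ q d)
            + (c:ℝ)^2 * (∑' d : ℤ, μ q d))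
        + ((c:ℝ)/b) * ((V (q+1)) + 2*((c:ℝ) - b) * (∑' d : ℤ, (d:ℝ) * μ (q+1) d)
            + ((c:ℝ) - b)^2 * (∑' d : ℤ, μ (q+1) d)) := by
  obtain ⟨hs1, he1⟩ := quad_shift (μ q) (sum0 b μ hμ V hV q) (sum1 b μ hμ V hV q)
    (sum2 μ V hV q) (c:ℤ)
  obtain ⟨hs2, he2⟩ := quad_shift (μ (q+1)) (sum0 b μ hμ V hV (q+1))
    (sum1 b μ hμ V hV (q+1)) (sum2 μ V hV (q+1)) ((c:ℤ) - b)
  have hpt : ∀ d : ℤ, (d:ℝ)^2 * μ (b*q+c) d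
      = (((b:ℝ)-c)/b) * ((d:ℝ)^2 * μ q (d - (c:ℤ)))
        + ((c:ℝ)/b) * ((d:ℝ)^2 * μ (q+1) (d - ((c:ℤ) - b))) := by
    intro d
    rw [mu_rec b hb μ hμ q c hc d]
    have h3 : d - (c:ℤ) + b = d - ((c:ℤ) - b) := by ring
    rw [← h3]
    ring
  have hVq := (hV q).tsum_eq
  have hVq1 := (hV (q+1)).tsum_eq
  have hVr := (hV (b*q+c)).tsum_eq
  rw [← hVr, tsum_congr hpt, Summable.tsum_add (hs1.mul_left _) (hs2.mul_left _),
    tsum_mul_left, tsum_mul_left, he1, he2, hVq, hVq1]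
  push_cast
  ring

end recs
lemma mass_E_eq (b : ℕ) (hb : 2 ≤ b) (μ : ℕ → ℤ → ℝ)
    (hμ : ∀ (r : ℕ) (d : ℤ),
      Tendsto (fun N : ℕ =>
        (((Finset.range N).filter fun n => delta b r n = d).card : ℝ) / N)
        atTop (𝓝 (μ r d)))
    (V : ℕ → ℝ)
    (hV : ∀ r : ℕ, HasSum (fun d : ℤ => (d : ℝ) ^ 2 * μ r d) (V r)) :
    ∀ r : ℕ, (∑' d : ℤ, μ r d) = 1 ∧ (∑' d : ℤ, (d:ℝ) * μ r d) = 0 := by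
  have hbR : (0:ℝ) < b := by positivity
  have hbne : (b:ℝ) ≠ 0 := ne_of_gt hbR
  intro r
  induction r using Nat.strong_induction_on with
  | _ r ih =>
    match r with
    | 0 =>
      constructor
      · rw [tsum_eq_single (0:ℤ) (fun d hd => by rw [mu_zero b μ hμ d, if_neg hd])]
        rw [mu_zero b μ hμ 0, if_pos rfl]
      · rw [tsum_eq_single (0:ℤ) (fun d hd => by rw [mu_zero b μ hμ d, if_neg hd, mul_zero])]
        simp
    | 1 =>
      obtain ⟨hM0, hE0⟩ := ih 0 (by omega)
      have h1 : b * 0 + 1 = 1 := by omega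
      have hMrec := mass_rec b μ V hb hμ hV 0 1 (by omega)
      have hErec := E_rec b μ V hb hμ hV 0 1 (by omega)
      rw [h1] at hMrec hErec
      simp only [Nat.zero_add] at hMrec hErec
      rw [hM0] at hMrec
      rw [hM0, hE0] at hErec
      have h2R : (2:ℝ) ≤ b := by exact_mod_cast hb
      have hbne1 : (b:ℝ) - 1 ≠ 0 := by linarith
      have hM1 : (∑' d : ℤ, μ 1 d) = 1 := by
        push_cast at hMrec
        field_simp at hMrec
        have hkey : ((∑' d : ℤ, μ 1 d) - 1) * ((b:ℝ) - 1) = 0 := by linear_combination hMrec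
        rcases mul_eq_zero.mp hkey with h | h
        · linarith
        · exact absurd h hbne1
      constructor
      · exact hM1
      · rw [hM1] at hErec
        push_cast at hErec
        field_simp at hErec
        have hkey : (∑' d : ℤ, (d:ℝ) * μ 1 d) * ((b:ℝ) - 1) = 0 := by linear_combination hErec
        rcases mul_eq_zero.mp hkey with h | h
        · exact h
        · exact absurd h hbne1
    | (r+2) =>
      set R := r + 2 with hR
      set q := R / b with hq
      set c := R % b with hc
      have hdm : b * q + c = R := Nat.div_add_mod R b
      have hcb : c < b := Nat.mod_lt _ (by omega)
      have hqR : q < R := by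
        rw [hq]
        exact Nat.div_lt_self (by omega) (by omega)
      obtain ⟨hMq, hEq⟩ := ih q hqR
      have hMrec := mass_rec b μ V hb hμ hV q c hcb
      have hErec := E_rec b μ V hb hμ hV q c hcb
      rw [hdm] at hMrec hErec
      rw [hMq] at hMrec
      rw [hMq, hEq] at hErec
      by_cases hc0 : c = 0
      · constructor
        · rw [hMrec, hc0]
          push_cast
          field_simp
          ring
        · rw [hErec, hc0]
          push_cast
          field_simp
          ring
      · have h2q : 2 * q ≤ b * q := Nat.mul_le_mul_right q hb
        have hq1R : q + 1 < R := by omega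
        obtain ⟨hMq1, hEq1⟩ := ih (q+1) hq1R
        rw [hMq1] at hMrec hErec
        rw [hEq1] at hErec
        constructor
        · rw [hMrec]
          field_simp
          ring
        · rw [hErec]
          field_simp
          ring
lemma V_formula (b : ℕ) (hb : 2 ≤ b) (μ : ℕ → ℤ → ℝ)
    (hμ : ∀ (r : ℕ) (d : ℤ),
      Tendsto (fun N : ℕ =>
        (((Finset.range N).filter fun n => delta b r n = d).card : ℝ) / N)
        atTop (𝓝 (μ r d)))
    (V : ℕ → ℝ)
    (hV : ∀ r : ℕ, HasSum (fun d : ℤ => (d : ℝ) ^ 2 * μ r d) (V r))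
    (q c : ℕ) (hc : c < b) :
    V (b*q+c) = (((b:ℝ)-c) * V q + c * V (q+1))/b + c*((b:ℝ)-c) := by
  have h := V_rec b μ V hb hμ hV q c hc
  obtain ⟨hMq, hEq⟩ := mass_E_eq b hb μ hμ V hV q
  obtain ⟨hMq1, hEq1⟩ := mass_E_eq b hb μ hμ V hV (q+1)
  rw [hMq, hEq, hMq1, hEq1] at h
  rw [h]
  have hbne : (b:ℝ) ≠ 0 := by positivity
  field_simp
  ring

lemma V_zero (b : ℕ) (μ : ℕ → ℤ → ℝ)
    (hμ : ∀ (r : ℕ) (d : ℤ),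
      Tendsto (fun N : ℕ =>
        (((Finset.range N).filter fun n => delta b r n = d).card : ℝ) / N)
        atTop (𝓝 (μ r d)))
    (V : ℕ → ℝ)
    (hV : ∀ r : ℕ, HasSum (fun d : ℤ => (d : ℝ) ^ 2 * μ r d) (V r)) :
    V 0 = 0 := by
  have h0 : ∀ d : ℤ, (d:ℝ)^2 * μ 0 d = 0 := by
    intro d
    by_cases hd : d = 0
    · subst hd; simp
    · rw [mu_zero b μ hμ d, if_neg hd, mul_zero]
  refine (hV 0).unique ?_
  have : (fun d : ℤ => (d:ℝ)^2 * μ 0 d) = (fun _ => (0:ℝ)) := funext h0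
  rw [this]
  exact hasSum_zero

lemma V_one (b : ℕ) (hb : 2 ≤ b) (μ : ℕ → ℤ → ℝ)
    (hμ : ∀ (r : ℕ) (d : ℤ),
      Tendsto (fun N : ℕ =>
        (((Finset.range N).filter fun n => delta b r n = d).card : ℝ) / N)
        atTop (𝓝 (μ r d)))
    (V : ℕ → ℝ)
    (hV : ∀ r : ℕ, HasSum (fun d : ℤ => (d : ℝ) ^ 2 * μ r d) (V r)) :
    V 1 = b := by
  have h := V_formula b hb μ hμ V hV 0 1 (by omega)
  rw [show b*0+1 = 1 from by omega, V_zero b μ hμ V hV] at h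
  have hbR : (0:ℝ) < b := by positivity
  have h2R : (2:ℝ) ≤ b := by exact_mod_cast hb
  have hbne : (b:ℝ) ≠ 0 := ne_of_gt hbR
  push_cast at h
  field_simp at h
  have hkey : (V 1 - b) * ((b:ℝ) - 1) = 0 := by linear_combination h
  rcases mul_eq_zero.mp hkey with h' | h'
  · linarith
  · exfalso; linarith

/-- **Lemma.** For every integer `r ≥ 1`, `|Var(μ^(r+1)) - Var(μ^(r))| ≤ b`. -/
theorem variance_difference (b : ℕ) (hb : 2 ≤ b)
    (μ : ℕ → ℤ → ℝ)
    (hμ : ∀ (r : ℕ) (d : ℤ),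
      Tendsto (fun N : ℕ =>
        (((Finset.range N).filter fun n => delta b r n = d).card : ℝ) / N)
        atTop (𝓝 (μ r d)))
    (V : ℕ → ℝ)
    (hV : ∀ r : ℕ, HasSum (fun d : ℤ => (d : ℝ) ^ 2 * μ r d) (V r))
    (r : ℕ) (hr : 1 ≤ r) :
    |V (r + 1) - V r| ≤ (b : ℝ) := by
  have hbR : (0:ℝ) < b := by positivity
  have h2R : (2:ℝ) ≤ b := by exact_mod_cast hb
  clear hr
  induction r using Nat.strong_induction_on with
  | _ r ih =>
    match r with
    | 0 =>
      rw [V_one b hb μ hμ V hV, V_zero b μ hμ V hV, sub_zero, abs_of_nonneg (by positivity)]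
    | (m+1) =>
      set r := m + 1 with hrdef
      set q := r / b with hq
      set c := r % b with hc
      have hdm : b * q + c = r := Nat.div_add_mod r b
      have hcb : c < b := Nat.mod_lt _ (by omega)
      have hqr : q < r := Nat.div_lt_self (by omega) (by omega)
      have hD := abs_le.mp (ih q hqr)
      have hVr : V r = (((b:ℝ)-c) * V q + c * V (q+1))/b + c*((b:ℝ)-c) := by
        rw [← hdm]; exact V_formula b hb μ hμ V hV q c hcb
      by_cases hlt : c + 1 < b
      · have hd1 : b*q + (c+1) = r + 1 := by omega
        have hVr1 : V (r+1) = (((b:ℝ)-(c+1)) * V q + ((c:ℝ)+1) * V (q+1))/b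
            + ((c:ℝ)+1)*((b:ℝ)-((c:ℝ)+1)) := by
          rw [← hd1]
          have := V_formula b hb μ hμ V hV q (c+1) hlt
          push_cast at this
          convert this using 3 <;> push_cast <;> ring
        have hkey : V (r+1) - V r = (V (q+1) - V q)/b + ((b:ℝ) - 2*c - 1) := by
          rw [hVr1, hVr]
          field_simp
          ring
        have hcR : (c:ℝ) + 2 ≤ b := by exact_mod_cast (by omega : c + 2 ≤ b)
        have hc0 : (0:ℝ) ≤ c := Nat.cast_nonneg c
        have hDb1 : (V (q+1) - V q)/b ≤ 1 := (div_le_one hbR).mpr hD.2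
        have hDb2 : -1 ≤ (V (q+1) - V q)/b := by
          rw [le_div_iff₀ hbR]; nlinarith [hD.1]
        rw [hkey, abs_le]
        constructor <;> linarith
      · have hceq : c + 1 = b := by omega
        have e1 : b*(q+1) = b*q + b := by ring
        have hd1 : b*(q+1) + 0 = r + 1 := by omega
        have hVr1 : V (r+1) = V (q+1) := by
          have h := V_formula b hb μ hμ V hV (q+1) 0 (by omega)
          rw [hd1] at h
          rw [h]
          push_cast
          field_simp
          ring
        have hcRe : (c:ℝ) = (b:ℝ) - 1 := by
          have : ((c:ℕ):ℝ) + 1 = b := by exact_mod_cast hceq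
          linarith
        have hkey : V (r+1) - V r = (V (q+1) - V q)/b - ((b:ℝ) - 1) := by
          rw [hVr1, hVr, hcRe]
          field_simp
          ring
        have hDb1 : (V (q+1) - V q)/b ≤ 1 := (div_le_one hbR).mpr hD.2
        have hDb2 : -1 ≤ (V (q+1) - V q)/b := by
          rw [le_div_iff₀ hbR]; nlinarith [hD.1]
        rw [hkey, abs_le]
        constructor <;> linarith
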